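/- For η > 0, y ∈ ℝ and ε > 0 set s_ε(y) = ε·Arsinh( e^{η/ε}·sinh(y/ε) ). Then |s_ε(y)| ≤ |y| + η for all ε > 0 and y ∈ ℝ, and for every y ≠ 0 one has lim_{ε→0⁺} s_ε(y) = y + η·sgn(y). -/

import Mathlib

open Topology Filter Real

private lemma hsp_upper (η : ℝ) (hη : 0 < η) {ε y : ℝ} (hε : 0 < ε) (hy : 0 ≤ y) :
    ε * Real.arsinh (Real.exp (η / ε) * Real.sinh (y / ε)) ≤ y + η := by
  have key : Real.exp (η / ε) * Real.sinh (y / ε) ≤ Real.sinh ((y + η) / ε) := by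
    rw [add_div, Real.sinh_add, ← Real.cosh_add_sinh]
    have h1 : 0 ≤ Real.sinh (η / ε) := Real.sinh_nonneg_iff.2 (by positivity)
    have h2 : Real.sinh (y / ε) < Real.cosh (y / ε) := Real.sinh_lt_cosh _
    nlinarith
  have h3 : Real.arsinh (Real.exp (η / ε) * Real.sinh (y / ε)) ≤ (y + η) / ε := by
    calc Real.arsinh (Real.exp (η / ε) * Real.sinh (y / ε))
        ≤ Real.arsinh (Real.sinh ((y + η) / ε)) := Real.arsinh_le_arsinh.2 key
      _ = (y + η) / ε := Real.arsinh_sinh _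
  calc ε * Real.arsinh (Real.exp (η / ε) * Real.sinh (y / ε)) ≤ ε * ((y + η) / ε) := by
        exact mul_le_mul_of_nonneg_left h3 hε.le
    _ = y + η := by field_simp

private lemma hsp_nonneg (η : ℝ) {ε y : ℝ} (hε : 0 < ε) (hy : 0 ≤ y) :
    0 ≤ ε * Real.arsinh (Real.exp (η / ε) * Real.sinh (y / ε)) := by
  have : 0 ≤ Real.arsinh (Real.exp (η / ε) * Real.sinh (y / ε)) :=
    Real.arsinh_nonneg_iff.2 (by positivity)
  positivity

private lemma hsp_odd (η : ℝ) (ε y : ℝ) :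
    ε * Real.arsinh (Real.exp (η / ε) * Real.sinh (-y / ε)) =
      -(ε * Real.arsinh (Real.exp (η / ε) * Real.sinh (y / ε))) := by
  rw [neg_div, Real.sinh_neg, mul_neg, Real.arsinh_neg, mul_neg]

private lemma hsp_lower (η : ℝ) (hη : 0 < η) {ε y : ℝ} (hε : 0 < ε) (hy : 0 < y) :
    y + η + ε * Real.log (1 - Real.exp (-(2 * y) / ε)) ≤
      ε * Real.arsinh (Real.exp (η / ε) * Real.sinh (y / ε)) := by
  set A := Real.exp (-(2 * y) / ε) with hA
  have hA1 : A < 1 := by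
    rw [hA]
    apply Real.exp_lt_one_iff.2
    have : 0 < 2 * y := by linarith
    exact div_neg_of_neg_of_pos (by linarith) hε
  have hApos : 0 < A := Real.exp_pos _
  set X := Real.exp (η / ε) * Real.sinh (y / ε) with hX
  have hXval : X = (1 - A) * Real.exp ((y + η) / ε) / 2 := by
    have e1 : Real.exp (η / ε) * Real.exp (y / ε) = Real.exp ((y + η) / ε) := by
      rw [← Real.exp_add]; ring_nf
    have e2 : Real.exp (η / ε) * Real.exp (-y / ε) =
        Real.exp (-(2 * y) / ε) * Real.exp ((y + η) / ε) := by
      rw [← Real.exp_add, ← Real.exp_add]; ring_nf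
    rw [hX, hA, Real.sinh_eq]
    field_simp
    have e2' : Real.exp (η / ε) * Real.exp (-(y / ε)) =
        Real.exp (-(y * 2 / ε)) * Real.exp ((y + η) / ε) := by
      rw [show -(y / ε) = -y / ε by ring, show -(y * 2 / ε) = -(2 * y) / ε by ring]; exact e2
    nlinarith [e1, e2']
  have hXpos : 0 < X := by
    rw [hXval]
    exact div_pos (mul_pos (by linarith) (Real.exp_pos _)) two_pos
  have hlog : Real.log (2 * X) ≤ Real.arsinh X := by
    rw [Real.arsinh]
    apply Real.log_le_log (by positivity)
    have h1 : X ≤ Real.sqrt (1 + X ^ 2) := by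
      rw [show X = Real.sqrt (X ^ 2) by rw [Real.sqrt_sq hXpos.le]]
      exact Real.sqrt_le_sqrt (by nlinarith [Real.sq_sqrt (sq_nonneg X)])
    nlinarith [Real.sqrt_le_sqrt (show X ^ 2 ≤ 1 + X ^ 2 by linarith)]
  have h2X : 2 * X = (1 - A) * Real.exp ((y + η) / ε) := by rw [hXval]; ring
  have hlogval : Real.log (2 * X) = Real.log (1 - A) + (y + η) / ε := by
    rw [h2X, Real.log_mul (by linarith) (Real.exp_ne_zero _), Real.log_exp]
  have : Real.log (1 - A) + (y + η) / ε ≤ Real.arsinh X := hlogval ▸ hlog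
  have := mul_le_mul_of_nonneg_left this hε.le
  calc y + η + ε * Real.log (1 - A) = ε * (Real.log (1 - A) + (y + η) / ε) := by
        field_simp; ring
    _ ≤ ε * Real.arsinh X := this

private lemma hsp_aux_tendsto (η : ℝ) (hη : 0 < η) {y : ℝ} (hy : 0 < y) :
    Tendsto (fun ε : ℝ => y + η + ε * Real.log (1 - Real.exp (-(2 * y) / ε)))
      (𝓝[>] 0) (𝓝 (y + η)) := by
  have h1 : Tendsto (fun ε : ℝ => -(2 * y) / ε) (𝓝[>] (0 : ℝ)) atBot := by
    have := tendsto_inv_nhdsGT_zero (𝕜 := ℝ)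
    have h2 : Tendsto (fun ε : ℝ => -(2 * y) * ε⁻¹) (𝓝[>] (0 : ℝ)) atBot :=
      this.const_mul_atTop_of_neg (by linarith)
    simpa [div_eq_mul_inv] using h2
  have h2 : Tendsto (fun ε : ℝ => Real.exp (-(2 * y) / ε)) (𝓝[>] (0 : ℝ)) (𝓝 0) :=
    Real.tendsto_exp_atBot.comp h1
  have h3 : Tendsto (fun ε : ℝ => 1 - Real.exp (-(2 * y) / ε)) (𝓝[>] (0 : ℝ)) (𝓝 1) := by
    simpa using tendsto_const_nhds.sub h2
  have h4 : Tendsto (fun ε : ℝ => Real.log (1 - Real.exp (-(2 * y) / ε))) (𝓝[>] (0 : ℝ))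
      (𝓝 0) := by
    have := (Real.continuousAt_log (by norm_num : (1 : ℝ) ≠ 0)).tendsto.comp h3
    simpa [Function.comp_def] using this
  have h5 : Tendsto (fun ε : ℝ => ε) (𝓝[>] (0 : ℝ)) (𝓝 0) :=
    tendsto_id.mono_left nhdsWithin_le_nhds
  have h6 := h5.mul h4
  simpa using tendsto_const_nhds.add h6

private lemma hsp_pos_limit (η : ℝ) (hη : 0 < η) {y : ℝ} (hy : 0 < y) :
    Tendsto (fun ε : ℝ => ε * Real.arsinh (Real.exp (η / ε) * Real.sinh (y / ε)))
      (𝓝[>] 0) (𝓝 (y + η)) := by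
  apply tendsto_of_tendsto_of_tendsto_of_le_of_le' (hsp_aux_tendsto η hη hy)
    tendsto_const_nhds
  · filter_upwards [self_mem_nhdsWithin] with ε hε
    exact hsp_lower η hη hε hy
  · filter_upwards [self_mem_nhdsWithin] with ε hε
    exact hsp_upper η hη hε hy.le

/-- **Pointwise limit of the generalized hyperbolic shift.**  For `η > 0` set
`s_ε(y) = ε·arsinh(e^{η/ε}·sinh(y/ε))`.  Then `|s_ε(y)| ≤ |y| + η` for all `ε > 0` and all
`y`, and `s_ε(y) → y + η·sgn(y)` as `ε → 0⁺` for every `y ≠ 0`. -/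
theorem hyperbolic_shift_pointwise_limit (η : ℝ) (hη : 0 < η) :
    (∀ ε : ℝ, 0 < ε → ∀ y : ℝ,
      |ε * Real.arsinh (Real.exp (η / ε) * Real.sinh (y / ε))| ≤ |y| + η) ∧
    ∀ y : ℝ, y ≠ 0 →
      Tendsto (fun ε : ℝ => ε * Real.arsinh (Real.exp (η / ε) * Real.sinh (y / ε)))
        (𝓝[>] 0) (𝓝 (y + η * Real.sign y)) := by
  constructor
  · intro ε hε y
    rcases le_or_gt 0 y with hy | hy
    · rw [abs_of_nonneg (hsp_nonneg η hε hy), abs_of_nonneg hy]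
      exact hsp_upper η hη hε hy
    · have h1 := hsp_upper η hη hε (neg_nonneg.2 hy.le)
      have h2 := hsp_nonneg η hε (neg_nonneg.2 hy.le) (y := -y)
      rw [hsp_odd η ε y] at h1 h2
      rw [abs_of_neg hy]
      rw [abs_le]
      constructor <;> linarith
  · intro y hy
    rcases hy.lt_or_gt with hy | hy
    · have h := (hsp_pos_limit η hη (neg_pos.2 hy)).neg
      rw [Real.sign_of_neg hy]
      have heq : (fun ε : ℝ => ε * Real.arsinh (Real.exp (η / ε) * Real.sinh (y / ε))) =
          fun ε : ℝ => -(ε * Real.arsinh (Real.exp (η / ε) * Real.sinh (-y / ε))) := by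
        funext ε; rw [hsp_odd]; ring_nf
      rw [heq]
      convert h using 2
      ring
    · rw [Real.sign_of_pos hy]
      have := hsp_pos_limit η hη hy
      convert this using 2
      ring
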